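/- arXiv:2605.04184 — 3 statements merged into one kernel-verified Lean document; each statement's English description precedes it below -/
import Mathlib

section
/- Let $\mu=(\mu_n)_{n\in\mathbb{Z}^+}$ be a growth rate with $\mu_0=1$, $\lim_{n\to\infty}\mu_n=\infty$, and $\mu_{n+1}/\mu_n\leq\theta$ for some $\theta\geq1$, and let $\widetilde\mu$ be its piecewise linear interpolation with inverse $\widetilde\mu^{-1}:[1,\infty)\to[0,\infty)$. Then for each $n\in\mathbb{N}$, $\frac{\mu_{\lfloor\widetilde\mu^{-1}(e^n)\rfloor+1}}{\mu_{\lfloor\widetilde\mu^{-1}(e^{n-1})\rfloor+1}} \leq e\theta^2$. -/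
/-- Control of the ratio of a growth rate sampled at the discretization points
`⌊μ̃⁻¹(eⁿ)⌋ + 1`. -/
theorem sampled_ratio_le (μ : ℕ → ℝ) (θ : ℝ) (hθ : 1 ≤ θ)
    (hpos : ∀ n, 0 < μ n) (hmono : StrictMono μ) (hμ0 : μ 0 = 1)
    (htop : Filter.Tendsto μ Filter.atTop Filter.atTop)
    (hratio : ∀ n, μ (n + 1) / μ n ≤ θ)
    (f : ℝ → ℝ)
    (hf : ∀ n : ℕ, ∀ t ∈ Set.Icc (n : ℝ) (n + 1),
      f t = μ n + (t - n) * (μ (n + 1) - μ n))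
    (g : ℝ → ℝ) (hg0 : ∀ s, 1 ≤ s → 0 ≤ g s)
    (hginv : ∀ s, 1 ≤ s → f (g s) = s) :
    ∀ n : ℕ, 1 ≤ n →
      μ (⌊g (Real.exp n)⌋₊ + 1) / μ (⌊g (Real.exp ((n : ℝ) - 1))⌋₊ + 1)
        ≤ Real.exp 1 * θ ^ 2 := by
  intro n hn
  have hn1 : (0:ℝ) ≤ (n:ℝ) - 1 := by
    have : (1:ℝ) ≤ (n:ℝ) := by exact_mod_cast hn
    linarith
  have h1 : (1:ℝ) ≤ Real.exp ((n:ℝ)-1) := Real.one_le_exp hn1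
  have h2 : (1:ℝ) ≤ Real.exp (n:ℝ) := Real.one_le_exp (by positivity)
  set a := g (Real.exp ((n:ℝ)-1)) with ha_def
  set b := g (Real.exp (n:ℝ)) with hb_def
  have ha0 : 0 ≤ a := hg0 _ h1
  have hb0 : 0 ≤ b := hg0 _ h2
  set k := ⌊a⌋₊ with hk_def
  set m := ⌊b⌋₊ with hm_def
  have hbk : b ∈ Set.Icc (m:ℝ) ((m:ℝ)+1) :=
    ⟨Nat.floor_le hb0, (Nat.lt_floor_add_one b).le⟩
  have hak : a ∈ Set.Icc (k:ℝ) ((k:ℝ)+1) :=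
    ⟨Nat.floor_le ha0, (Nat.lt_floor_add_one a).le⟩
  have fb : μ m + (b - m) * (μ (m+1) - μ m) = Real.exp (n:ℝ) := by
    rw [← hf m b hbk]; exact hginv _ h2
  have fa : μ k + (a - k) * (μ (k+1) - μ k) = Real.exp ((n:ℝ)-1) := by
    rw [← hf k a hak]; exact hginv _ h1
  have hμm : μ m ≤ Real.exp (n:ℝ) := by
    nlinarith [hbk.1, (hmono (Nat.lt_succ_self m)).le]
  have hμk : Real.exp ((n:ℝ)-1) ≤ μ (k+1) := by
    nlinarith [hak.1, hak.2, (hmono (Nat.lt_succ_self k)).le]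
  have hm1 : μ (m+1) ≤ θ * μ m := by
    have h := hratio m
    rw [div_le_iff₀ (hpos m)] at h
    linarith
  rw [div_le_iff₀ (hpos (k+1))]
  have hexp : Real.exp (n:ℝ) = Real.exp 1 * Real.exp ((n:ℝ)-1) := by
    rw [← Real.exp_add]; ring_nf
  have step1 : μ (m+1) ≤ θ * (Real.exp 1 * Real.exp ((n:ℝ)-1)) := by
    calc μ (m+1) ≤ θ * μ m := hm1
      _ ≤ θ * Real.exp (n:ℝ) := by
          exact mul_le_mul_of_nonneg_left hμm (by linarith)
      _ = θ * (Real.exp 1 * Real.exp ((n:ℝ)-1)) := by rw [hexp]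
  have step2 : θ * (Real.exp 1 * Real.exp ((n:ℝ)-1)) ≤ Real.exp 1 * θ^2 * μ (k+1) := by
    have hθ0 : 0 < θ := lt_of_lt_of_le one_pos hθ
    have e1 : (0:ℝ) < Real.exp 1 := Real.exp_pos 1
    have s1 : Real.exp 1 * θ * Real.exp ((n:ℝ)-1) ≤ Real.exp 1 * θ * μ (k+1) :=
      mul_le_mul_of_nonneg_left hμk (le_of_lt (mul_pos e1 hθ0))
    have s2 : Real.exp 1 * θ * μ (k+1) ≤ Real.exp 1 * θ^2 * μ (k+1) := by
      have hμ := hpos (k+1)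
      nlinarith [mul_nonneg (mul_nonneg (mul_pos e1 hθ0).le hμ.le)
        (sub_nonneg.mpr hθ)]
    linarith [s1, s2]
  linarith
end

section
/- Let $(A_n)_{n\in\mathbb{N}}$ be invertible operators on $\mathbb{R}^d$ with evolution family $\mathcal{A}(m,n)$ satisfying $\|\mathcal{A}(m,n)\| \leq K(\mu_m/\mu_n)^a$ for $m\geq n$, and let $g_n$ be $C^1$ maps with $\|Dg_n(x)\| \leq c\frac{\mu_{n+1}-\mu_n}{\mu_n}$ for all $x$. Let $G_n = A_n + g_n$ and $\mathcal{G}(m,n) = G_{m-1}\circ\cdots\circ G_n$ for $m>n$ (identity for $m=n$). Assume $\mu_{n+1}/\mu_n\leq\theta$ for some $\theta\geq1$. Then for all $m\geq n$ and $x\in\mathbb{R}^d$, $\|D\mathcal{G}(m,n)(x)\| \leq K(\mu_m/\mu_n)^{a+Kc\theta}$. -/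
/-- Bound on the derivative of the nonlinear evolution family `𝒢(m,n)`. -/
theorem deriv_nonlinear_evolution_bound (d : ℕ) (K a c θ : ℝ) (hK : 0 < K)
    (ha : 0 < a) (hc : 0 < c) (hθ : 1 ≤ θ)
    (μ : ℕ → ℝ) (hpos : ∀ n, 0 < μ n) (hmono : StrictMono μ)
    (hratio : ∀ n, μ (n + 1) / μ n ≤ θ)
    (𝒜 : ℕ → ℕ → EuclideanSpace ℝ (Fin d) →L[ℝ] EuclideanSpace ℝ (Fin d))
    (h𝒜id : ∀ n, 𝒜 n n = ContinuousLinearMap.id ℝ _)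
    (h𝒜cocycle : ∀ n k m, n ≤ k → k ≤ m → (𝒜 m k).comp (𝒜 k n) = 𝒜 m n)
    (h𝒜norm : ∀ n m, n ≤ m → ‖𝒜 m n‖ ≤ K * (μ m / μ n) ^ a)
    (g : ℕ → EuclideanSpace ℝ (Fin d) → EuclideanSpace ℝ (Fin d))
    (hgdiff : ∀ n, ContDiff ℝ 1 (g n))
    (hgderiv : ∀ n x, ‖fderiv ℝ (g n) x‖ ≤ c * ((μ (n + 1) - μ n) / μ n))
    (G : ℕ → EuclideanSpace ℝ (Fin d) → EuclideanSpace ℝ (Fin d))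
    (hG : ∀ n x, G n x = 𝒜 (n + 1) n x + g n x)
    (𝒢 : ℕ → ℕ → EuclideanSpace ℝ (Fin d) → EuclideanSpace ℝ (Fin d))
    (h𝒢id : ∀ n, 𝒢 n n = id)
    (h𝒢rec : ∀ n m, n ≤ m → 𝒢 (m + 1) n = G m ∘ 𝒢 m n) :
    ∀ n m, n ≤ m → ∀ x,
      ‖fderiv ℝ (𝒢 m n) x‖ ≤ K * (μ m / μ n) ^ (a + K * c * θ) := by
  -- differentiability of G
  have hGdiff : ∀ n, Differentiable ℝ (G n) := by
    intro n
    have h : G n = fun x => 𝒜 (n + 1) n x + g n x := funext (hG n)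
    rw [h]
    exact ((𝒜 (n + 1) n).differentiable).add ((hgdiff n).differentiable one_ne_zero)
  have hGfderiv : ∀ n y, fderiv ℝ (G n) y = 𝒜 (n + 1) n + fderiv ℝ (g n) y := by
    intro n y
    have h : G n = fun x => 𝒜 (n + 1) n x + g n x := funext (hG n)
    rw [h, fderiv_fun_add ((𝒜 (n + 1) n).differentiableAt)
      (((hgdiff n).differentiable one_ne_zero) y), (𝒜 (n + 1) n).fderiv]
  have h𝒢diff : ∀ n m, n ≤ m → Differentiable ℝ (𝒢 m n) := by
    intro n m hnm
    induction m, hnm using Nat.le_induction with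
    | base => rw [h𝒢id]; exact differentiable_id
    | succ m hm ih => rw [h𝒢rec n m hm]; exact (hGdiff m).comp ih
  -- variation of constants formula
  have hvar : ∀ n x m, n ≤ m → fderiv ℝ (𝒢 m n) x =
      𝒜 m n + ∑ j ∈ Finset.Ico n m,
        (𝒜 m (j + 1)).comp ((fderiv ℝ (g j) (𝒢 j n x)).comp (fderiv ℝ (𝒢 j n) x)) := by
    intro n x m hnm
    induction m, hnm using Nat.le_induction with
    | base => simp [h𝒢id, h𝒜id]
    | succ m hm ih =>
      rw [h𝒢rec n m hm,
        fderiv_comp x ((hGdiff m).differentiableAt) ((h𝒢diff n m hm).differentiableAt),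
        hGfderiv, Finset.sum_Ico_succ_top hm, h𝒜id (m + 1),
        ContinuousLinearMap.id_comp, ih, ContinuousLinearMap.add_comp,
        ContinuousLinearMap.comp_add (𝒜 (m + 1) m) (𝒜 m n),
        (𝒜 (m + 1) m).comp_finset_sum,
        h𝒜cocycle n m (m + 1) hm (Nat.le_succ m), add_assoc]
      congr 2
      refine Finset.sum_congr rfl fun j hj => ?_
      rw [← ContinuousLinearMap.comp_assoc,
        h𝒜cocycle (j + 1) m (m + 1) (Finset.mem_Ico.1 hj).2 (Nat.le_succ m)]
  -- key scalar inequality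
  have key : ∀ r : ℝ, 1 ≤ r → r ≤ θ → K * c * (r - 1) ≤ r ^ (K * c * θ) - 1 := by
    intro r h1 h2
    have hr0 : (0:ℝ) < r := lt_of_lt_of_le one_pos h1
    have hlog : 0 ≤ Real.log r := Real.log_nonneg h1
    have h3 : r - 1 ≤ θ * Real.log r := by
      have hi := Real.log_le_sub_one_of_pos (show (0:ℝ) < r⁻¹ by positivity)
      rw [Real.log_inv] at hi
      have hinv : r * r⁻¹ = 1 := mul_inv_cancel₀ hr0.ne'
      have h4 : r - 1 ≤ r * Real.log r := by nlinarith
      nlinarith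
    have h5 : 1 + (K * c * θ) * Real.log r ≤ r ^ (K * c * θ) := by
      rw [Real.rpow_def_of_pos hr0]
      linarith [Real.add_one_le_exp (Real.log r * (K * c * θ))]
    nlinarith [mul_le_mul_of_nonneg_left h3 (le_of_lt (mul_pos hK hc))]
  intro n m
  induction m using Nat.strong_induction_on with
  | _ m ih =>
  intro hnm x
  have hμnm : 0 < μ m / μ n := div_pos (hpos m) (hpos n)
  rw [hvar n x m hnm]
  have hterm : ∀ j ∈ Finset.Ico n m,
      ‖(𝒜 m (j + 1)).comp ((fderiv ℝ (g j) (𝒢 j n x)).comp (fderiv ℝ (𝒢 j n) x))‖ ≤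
        K * (μ m / μ n) ^ a *
          ((μ (j + 1) / μ n) ^ (K * c * θ) - (μ j / μ n) ^ (K * c * θ)) := by
    intro j hj
    obtain ⟨hnj, hjm⟩ := Finset.mem_Ico.1 hj
    have hj1m : j + 1 ≤ m := hjm
    set r := μ (j + 1) / μ j with hr
    have hr1 : 1 ≤ r := le_of_lt ((one_lt_div (hpos j)).2 (hmono (Nat.lt_succ_self j)))
    have hrθ : r ≤ θ := hratio j
    have hd1 : 0 < μ m / μ (j + 1) := div_pos (hpos m) (hpos (j + 1))
    have hd2 : 0 < μ j / μ n := div_pos (hpos j) (hpos n)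
    have hr0 : (0:ℝ) ≤ r := le_trans zero_le_one hr1
    have hA : ‖𝒜 m (j + 1)‖ ≤ K * (μ m / μ (j + 1)) ^ a := h𝒜norm (j + 1) m hj1m
    have hB : ‖fderiv ℝ (g j) (𝒢 j n x)‖ ≤ c * (r - 1) := by
      have := hgderiv j (𝒢 j n x)
      rwa [sub_div, div_self (hpos j).ne'] at this
    have hC : ‖fderiv ℝ (𝒢 j n) x‖ ≤ K * (μ j / μ n) ^ (a + K * c * θ) :=
      ih j hjm hnj x
    have hnorm : ‖(𝒜 m (j + 1)).comp ((fderiv ℝ (g j) (𝒢 j n x)).comp (fderiv ℝ (𝒢 j n) x))‖ ≤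
        (K * (μ m / μ (j + 1)) ^ a) * ((c * (r - 1)) * (K * (μ j / μ n) ^ (a + K * c * θ))) := by
      refine le_trans ((𝒜 m (j + 1)).opNorm_comp_le _) ?_
      have h2 := le_trans (ContinuousLinearMap.opNorm_comp_le _ _)
        (mul_le_mul hB hC (norm_nonneg _) (mul_nonneg hc.le (by linarith)))
      exact mul_le_mul hA h2 (norm_nonneg _) (mul_nonneg hK.le (Real.rpow_nonneg hd1.le _))
    refine hnorm.trans ?_
    -- scalar inequality
    have hsplit : (μ j / μ n) ^ (a + K * c * θ) =
        (μ j / μ n) ^ a * (μ j / μ n) ^ (K * c * θ) :=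
      Real.rpow_add (div_pos (hpos j) (hpos n)) _ _
    have hmul : (μ (j + 1) / μ n) ^ (K * c * θ) =
        r ^ (K * c * θ) * (μ j / μ n) ^ (K * c * θ) := by
      rw [← Real.mul_rpow hr0 hd2.le]
      congr 1
      rw [hr, div_mul_div_comm, mul_comm (μ j) (μ n), mul_div_mul_right _ _ (hpos j).ne']
    have hP : (μ m / μ (j + 1)) ^ a * (μ j / μ n) ^ a ≤ (μ m / μ n) ^ a := by
      rw [← Real.mul_rpow hd1.le hd2.le]
      refine Real.rpow_le_rpow (mul_nonneg hd1.le hd2.le) ?_ ha.le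
      have heq : μ m / μ (j + 1) * (μ j / μ n) = μ m / μ n * (μ j / μ (j + 1)) := by
        field_simp
      rw [heq]
      exact mul_le_of_le_one_right hμnm.le
        ((div_le_one (hpos (j + 1))).2 (hmono (Nat.lt_succ_self j)).le)
    have h1 := key r hr1 hrθ
    have h3 : K * (μ j / μ n) ^ (K * c * θ) *
          ((μ m / μ (j + 1)) ^ a * (μ j / μ n) ^ a * (K * c * (r - 1))) ≤
        K * (μ j / μ n) ^ (K * c * θ) * ((μ m / μ n) ^ a * (r ^ (K * c * θ) - 1)) :=
      mul_le_mul_of_nonneg_left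
        (mul_le_mul hP h1
          (mul_nonneg (mul_pos hK hc).le (by linarith)) (Real.rpow_nonneg hμnm.le _))
        (mul_nonneg hK.le (Real.rpow_nonneg hd2.le _))
    rw [hsplit, hmul]
    nlinarith [h3]
  have htel : ∑ j ∈ Finset.Ico n m,
      ((μ (j + 1) / μ n) ^ (K * c * θ) - (μ j / μ n) ^ (K * c * θ)) =
      (μ m / μ n) ^ (K * c * θ) - (μ n / μ n) ^ (K * c * θ) := by
    rw [Finset.sum_Ico_eq_sub _ hnm,
      Finset.sum_range_sub (fun j => (μ j / μ n) ^ (K * c * θ)),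
      Finset.sum_range_sub (fun j => (μ j / μ n) ^ (K * c * θ))]
    ring
  calc ‖𝒜 m n + ∑ j ∈ Finset.Ico n m,
        (𝒜 m (j + 1)).comp ((fderiv ℝ (g j) (𝒢 j n x)).comp (fderiv ℝ (𝒢 j n) x))‖
      ≤ ‖𝒜 m n‖ + ∑ j ∈ Finset.Ico n m,
        ‖(𝒜 m (j + 1)).comp ((fderiv ℝ (g j) (𝒢 j n x)).comp (fderiv ℝ (𝒢 j n) x))‖ :=
      (norm_add_le _ _).trans (by gcongr; exact norm_sum_le _ _)
    _ ≤ K * (μ m / μ n) ^ a + ∑ j ∈ Finset.Ico n m,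
        K * (μ m / μ n) ^ a *
          ((μ (j + 1) / μ n) ^ (K * c * θ) - (μ j / μ n) ^ (K * c * θ)) :=
      add_le_add (h𝒜norm n m hnm) (Finset.sum_le_sum hterm)
    _ = K * (μ m / μ n) ^ a * (μ m / μ n) ^ (K * c * θ) := by
      rw [← Finset.mul_sum, htel, div_self (hpos n).ne', Real.one_rpow]
      ring
    _ = K * (μ m / μ n) ^ (a + K * c * θ) := by
      rw [Real.rpow_add hμnm]
      ring
end

section
/- Let $T(t,s)$ be an evolution family on $\mathbb{R}^d$ (i.e., $T(t,t)=\mathrm{Id}$, $T(t,s)T(s,r)=T(t,r)$, and each $T(t,s)$ is invertible with $T(t,s)^{-1}=T(s,t)$), defined for $t,s\geq 1$. Suppose the sequence $A_n := T(n+1,n)$, $n\in\mathbb{N}$, admits a strong $\mu$-dichotomy with projections $P_n$, constants $K>0$, $a\geq\lambda>0$, for a growth rate $\mu:[1,\infty)\to(0,\infty)$ satisfying $\mu(t+1)/\mu(t)\leq\theta$ for some $\theta\geq1$, and that $\|T(t,s)\|\leq K(\mu(t)/\mu(s))^a$ and $\|T(s,t)\|\leq K(\mu(t)/\mu(s))^a$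 for $t\geq s\geq 1$. Define $P(t) := T(t,n)P_nT(n,t)$ for $t\in[n,n+1)$. Then for all $t\geq s\geq 1$: (i) $P(t)T(t,s)=T(t,s)P(s)$; (ii) $\|T(t,s)P(s)\| \leq K^3\theta^{2a+\lambda}(\mu(t)/\mu(s))^{-\lambda}$. -/
open Real in
/-- A strong `μ`-dichotomy of the discretization lifts to the continuous-time
evolution family (Proposition 5.3). -/
theorem dichotomy_discretization_lifts (d : ℕ) (K lam a θ : ℝ)
    (hK : 0 < K) (hlam : 0 < lam) (hla : lam ≤ a) (hθ : 1 ≤ θ)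
    (μ : ℝ → ℝ) (hμpos : ∀ t, 1 ≤ t → 0 < μ t)
    (hμmono : StrictMonoOn μ (Set.Ici 1))
    (hμratio : ∀ t, 1 ≤ t → μ (t + 1) / μ t ≤ θ)
    (T : ℝ → ℝ → EuclideanSpace ℝ (Fin d) →L[ℝ] EuclideanSpace ℝ (Fin d))
    (hTid : ∀ t, 1 ≤ t → T t t = ContinuousLinearMap.id ℝ _)
    (hTcocycle : ∀ t s r, 1 ≤ r → 1 ≤ s → 1 ≤ t →
      (T t s).comp (T s r) = T t r)
    (hTgrow : ∀ t s, 1 ≤ s → s ≤ t →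
      ‖T t s‖ ≤ K * (μ t / μ s) ^ a ∧ ‖T s t‖ ≤ K * (μ t / μ s) ^ a)
    (P : ℕ → EuclideanSpace ℝ (Fin d) →L[ℝ] EuclideanSpace ℝ (Fin d))
    (hPproj : ∀ n : ℕ, 1 ≤ n → (P n).comp (P n) = P n)
    (hPcomm : ∀ n : ℕ, 1 ≤ n →
      (T (n + 1) n).comp (P n) = (P (n + 1)).comp (T (n + 1) n))
    (hPs : ∀ m n : ℕ, 1 ≤ n → n ≤ m →
      ‖(T m n).comp (P n)‖ ≤ K * (μ m / μ n) ^ (-lam))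
    (hPu : ∀ m n : ℕ, 1 ≤ n → n ≤ m →
      ‖(T n m).comp (ContinuousLinearMap.id ℝ _ - P m)‖ ≤ K * (μ m / μ n) ^ (-lam))
    (Pt : ℝ → EuclideanSpace ℝ (Fin d) →L[ℝ] EuclideanSpace ℝ (Fin d))
    (hPt : ∀ n : ℕ, 1 ≤ n → ∀ t ∈ Set.Ico (n : ℝ) (n + 1),
      Pt t = (T t n).comp ((P n).comp (T n t))) :
    ∀ t s : ℝ, 1 ≤ s → s ≤ t →
      (Pt t).comp (T t s) = (T t s).comp (Pt s) ∧
      ‖(T t s).comp (Pt s)‖ ≤ K ^ 3 * θ ^ (2 * a + lam) * (μ t / μ s) ^ (-lam) := by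
  intro t s hs hst
  have ht : (1:ℝ) ≤ t := le_trans hs hst
  set n := ⌊t⌋₊ with hn
  set m := ⌊s⌋₊ with hmdef
  have hm1 : 1 ≤ m := Nat.le_floor (by exact_mod_cast hs)
  have hn1 : 1 ≤ n := Nat.le_floor (by exact_mod_cast ht)
  have hmn : m ≤ n := Nat.floor_le_floor hst
  have hms : (m:ℝ) ≤ s := Nat.floor_le (by linarith)
  have hsm1 : s < m + 1 := Nat.lt_floor_add_one s
  have hnt : (n:ℝ) ≤ t := Nat.floor_le (by linarith)
  have htn1 : t < n + 1 := Nat.lt_floor_add_one t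
  have hm1R : (1:ℝ) ≤ m := by exact_mod_cast hm1
  have hn1R : (1:ℝ) ≤ n := by exact_mod_cast hn1
  -- pointwise cocycle
  have Tco : ∀ a b c : ℝ, 1 ≤ c → 1 ≤ b → 1 ≤ a → ∀ x,
      T a b (T b c x) = T a c x := by
    intro a b c hc hb ha x
    rw [← ContinuousLinearMap.comp_apply, hTcocycle a b c hc hb ha]
  -- commutation of projections with integer-time maps
  have comm : ∀ k j : ℕ, 1 ≤ j →
      (P (j + k)).comp (T (↑(j + k)) ↑j) = (T (↑(j + k)) ↑j).comp (P j) := by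
    intro k
    induction k with
    | zero =>
      intro j hj
      simp [hTid _ (by exact_mod_cast hj : (1:ℝ) ≤ (j:ℝ))]
    | succ k ih =>
      intro j hj
      have hj1 : (1:ℝ) ≤ j := by exact_mod_cast hj
      have hjk1 : (1:ℝ) ≤ ((j + k : ℕ) : ℝ) := by
        have : (j:ℝ) ≤ ((j + k : ℕ) : ℝ) := by exact_mod_cast Nat.le_add_right j k
        linarith
      have hcast : ((j + (k + 1) : ℕ) : ℝ) = ((j + k : ℕ) : ℝ) + 1 := by
        push_cast; ring
      have hco : (T (((j + k : ℕ) : ℝ) + 1) ↑(j + k)).comp (T ↑(j + k) ↑j)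
          = T (((j + k : ℕ) : ℝ) + 1) ↑j :=
        hTcocycle _ _ _ hj1 hjk1 (by linarith)
      have hpc := hPcomm (j + k) (le_trans hj (Nat.le_add_right _ _))
      have : (P (j + k + 1)).comp (T (((j + k : ℕ) : ℝ) + 1) ↑j)
          = (T (((j + k : ℕ) : ℝ) + 1) ↑j).comp (P j) := by
        calc (P (j + k + 1)).comp (T (((j + k : ℕ) : ℝ) + 1) ↑j)
            = (P (j + k + 1)).comp
              ((T (((j + k : ℕ) : ℝ) + 1) ↑(j + k)).comp (T ↑(j + k) ↑j)) := by
              rw [hco]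
          _ = ((P (j + k + 1)).comp
                (T (((j + k : ℕ) : ℝ) + 1) ↑(j + k))).comp (T ↑(j + k) ↑j) := by
              rw [ContinuousLinearMap.comp_assoc]
          _ = ((T (((j + k : ℕ) : ℝ) + 1) ↑(j + k)).comp (P (j + k))).comp
                (T ↑(j + k) ↑j) := by rw [hpc]
          _ = (T (((j + k : ℕ) : ℝ) + 1) ↑(j + k)).comp
                ((P (j + k)).comp (T ↑(j + k) ↑j)) := by
              rw [ContinuousLinearMap.comp_assoc]
          _ = (T (((j + k : ℕ) : ℝ) + 1) ↑(j + k)).comp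
                ((T ↑(j + k) ↑j).comp (P j)) := by rw [ih j hj]
          _ = ((T (((j + k : ℕ) : ℝ) + 1) ↑(j + k)).comp (T ↑(j + k) ↑j)).comp
                (P j) := by rw [ContinuousLinearMap.comp_assoc]
          _ = (T (((j + k : ℕ) : ℝ) + 1) ↑j).comp (P j) := by rw [hco]
      show (P (j + (k + 1))).comp (T (↑(j + (k+1))) ↑j)
          = (T (↑(j + (k+1))) ↑j).comp (P j)
      rw [hcast]
      exact this
  have commNM : ∀ x, P n (T ↑n ↑m x) = T ↑n ↑m (P m x) := by
    intro x
    obtain ⟨k, hk⟩ := Nat.exists_eq_add_of_le hmn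
    rw [hk]
    have := comm k m hm1
    calc P (m + k) (T ↑(m + k) ↑m x)
        = ((P (m + k)).comp (T ↑(m + k) ↑m)) x := rfl
      _ = ((T ↑(m + k) ↑m).comp (P m)) x := by rw [this]
      _ = T ↑(m + k) ↑m (P m x) := rfl
  have hPts : Pt s = (T s ↑m).comp ((P m).comp (T ↑m s)) :=
    hPt m hm1 s ⟨hms, hsm1⟩
  have hPtt : Pt t = (T t ↑n).comp ((P n).comp (T ↑n t)) :=
    hPt n hn1 t ⟨hnt, htn1⟩
  -- key factorization of T t s ∘ Pt s
  have hkey : (T t s).comp (Pt s)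
      = (T t ↑n).comp (((T ↑n ↑m).comp (P m)).comp (T ↑m s)) := by
    ext x
    simp only [hPts, ContinuousLinearMap.comp_apply]
    rw [Tco t s ↑m hm1R hs ht, ← Tco t ↑n ↑m hm1R hn1R ht (P m (T ↑m s x))]
  constructor
  · -- commutation
    ext x
    simp only [hPtt, hPts, ContinuousLinearMap.comp_apply]
    rw [Tco ↑n t s hs ht hn1R, ← Tco ↑n ↑m s hs hm1R hn1R x, commNM,
      Tco t ↑n ↑m hm1R hn1R ht, Tco t s ↑m hm1R hs ht]
  · -- norm estimate
    have pμt := hμpos t ht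
    have pμs := hμpos s hs
    have pμn := hμpos ↑n hn1R
    have pμm := hμpos ↑m hm1R
    have hθ0 : (0:ℝ) < θ := lt_of_lt_of_le one_pos hθ
    have ha0 : (0:ℝ) ≤ a := le_trans hlam.le hla
    have h1 : μ t ≤ θ * μ ↑n := by
      have h1a : μ t ≤ μ (↑n + 1) := by
        rcases eq_or_lt_of_le (le_of_lt htn1) with h | h
        · rw [h]
        · exact (hμmono ht (by simp only [Set.mem_Ici]; linarith) h).le
      have h1b : μ (↑n + 1) / μ ↑n ≤ θ := hμratio ↑n hn1R
      rw [div_le_iff₀ pμn] at h1b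
      linarith
    have h2 : μ s ≤ θ * μ ↑m := by
      have h2a : μ s ≤ μ (↑m + 1) := by
        rcases eq_or_lt_of_le (le_of_lt hsm1) with h | h
        · rw [h]
        · exact (hμmono hs (by simp only [Set.mem_Ici]; linarith) h).le
      have h2b : μ (↑m + 1) / μ ↑m ≤ θ := hμratio ↑m hm1R
      rw [div_le_iff₀ pμm] at h2b
      linarith
    have h3 : μ ↑n ≤ μ t := hμmono.monotoneOn hn1R ht hnt
    have h4 : μ ↑m ≤ μ s := hμmono.monotoneOn hm1R hs hms
    have A1 : (μ t / μ ↑n) ^ a ≤ θ ^ a := by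
      apply Real.rpow_le_rpow (by positivity) _ ha0
      rw [div_le_iff₀ pμn]; linarith
    have A3 : (μ s / μ ↑m) ^ a ≤ θ ^ a := by
      apply Real.rpow_le_rpow (by positivity) _ ha0
      rw [div_le_iff₀ pμm]; linarith
    have A2 : (μ ↑n / μ ↑m) ^ (-lam) ≤ θ ^ lam * (μ t / μ s) ^ (-lam) := by
      have hbase : μ t / μ s ≤ θ * (μ ↑n / μ ↑m) := by
        rw [← mul_div_assoc]
        exact div_le_div₀ (by positivity) h1 pμm h4
      have hpow : (μ t / μ s) ^ lam ≤ θ ^ lam * (μ ↑n / μ ↑m) ^ lam := by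
        calc (μ t / μ s) ^ lam ≤ (θ * (μ ↑n / μ ↑m)) ^ lam :=
              Real.rpow_le_rpow (by positivity) hbase hlam.le
          _ = θ ^ lam * (μ ↑n / μ ↑m) ^ lam :=
              Real.mul_rpow hθ0.le (by positivity)
      have hu : (0:ℝ) < (μ ↑n / μ ↑m) ^ lam := Real.rpow_pos_of_pos (by positivity) _
      have hv : (0:ℝ) < (μ t / μ s) ^ lam := Real.rpow_pos_of_pos (by positivity) _
      rw [Real.rpow_neg (by positivity), Real.rpow_neg (by positivity),
        ← div_eq_mul_inv, inv_eq_one_div, div_le_div_iff₀ hu hv]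
      nlinarith [Real.rpow_nonneg hθ0.le lam]
    have XB : ‖T t ↑n‖ ≤ K * (μ t / μ ↑n) ^ a := (hTgrow t ↑n hn1R hnt).1
    have YB : ‖(T ↑n ↑m).comp (P m)‖ ≤ K * (μ ↑n / μ ↑m) ^ (-lam) :=
      hPs n m hm1 hmn
    have ZB : ‖T ↑m s‖ ≤ K * (μ s / μ ↑m) ^ a := (hTgrow s ↑m hm1R hms).2
    calc ‖(T t s).comp (Pt s)‖
        = ‖(T t ↑n).comp (((T ↑n ↑m).comp (P m)).comp (T ↑m s))‖ := by rw [hkey]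
      _ ≤ ‖T t ↑n‖ * (‖(T ↑n ↑m).comp (P m)‖ * ‖T ↑m s‖) := by
          refine le_trans (ContinuousLinearMap.opNorm_comp_le _ _) ?_
          gcongr
          exact ContinuousLinearMap.opNorm_comp_le _ _
      _ ≤ (K * (μ t / μ ↑n) ^ a) *
            ((K * (μ ↑n / μ ↑m) ^ (-lam)) * (K * (μ s / μ ↑m) ^ a)) := by
          gcongr <;> positivity
      _ ≤ (K * θ ^ a) * ((K * (θ ^ lam * (μ t / μ s) ^ (-lam))) * (K * θ ^ a)) := by
          gcongr
      _ = K ^ 3 * θ ^ (2 * a + lam) * (μ t / μ s) ^ (-lam) := by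
          rw [show 2 * a + lam = a + (lam + a) by ring, Real.rpow_add hθ0,
            Real.rpow_add hθ0]
          ring
end
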